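/- arXiv:cs/0203029 — 2 statements merged into one kernel-verified Lean document; each statement's English description precedes it below -/
import Mathlib

section
/- Bit-pattern decoding: define b : ℕ → Bool for n ≥ 1 by writing n = 2^k·(2l+1) and setting b(n) = (l mod 2). Then for every a ≥ 2 and every m, the sequence of values b(m), b(m+1), …, b(m + 2^a − 1) determines m mod 2^{a−2}; that is, if two starting points m, m' yield the same length-2^a pattern of b-values, then m ≡ m' (mod 2^{a−2}). -/
/-- `b(2^k(2l+1)) = l mod 2`: the bit extracted from the odd part of `n`. -/
def oddPartBit (n : ℕ) : Bool :=
  ((n / 2 ^ (padicValNat 2 n)) / 2) % 2 = 1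

lemma padic_aux (k c : ℕ) (hc : c % 2 = 1) : padicValNat 2 (2 ^ k * c) = k := by
  haveI : Fact (Nat.Prime 2) := ⟨Nat.prime_two⟩
  rw [padicValNat.mul (by positivity) (by omega), padicValNat.prime_pow,
    padicValNat.eq_zero_of_not_dvd (by omega)]
  omega

lemma bitA (k q : ℕ) : oddPartBit (2 ^ k * (4 * q + 1)) = false := by
  unfold oddPartBit
  rw [padic_aux k _ (by omega), Nat.mul_div_cancel_left _ (by positivity),
    decide_eq_false_iff_not]
  omega

lemma bitB (k q : ℕ) : oddPartBit (2 ^ k * (4 * q + 3)) = true := by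
  unfold oddPartBit
  rw [padic_aux k _ (by omega), Nat.mul_div_cancel_left _ (by positivity),
    decide_eq_true_eq]
  omega

lemma b_false (t n : ℕ) (h : n % (4 * 2 ^ t) = 2 ^ t) : oddPartBit n = false := by
  have hd := Nat.div_add_mod n (4 * 2 ^ t)
  rw [h] at hd
  have hn : n = 2 ^ t * (4 * (n / (4 * 2 ^ t)) + 1) := by
    calc n = 4 * 2 ^ t * (n / (4 * 2 ^ t)) + 2 ^ t := hd.symm
      _ = 2 ^ t * (4 * (n / (4 * 2 ^ t)) + 1) := by ring
  rw [hn, bitA]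

lemma b_true (t n : ℕ) (h : n % (8 * 2 ^ t) = 6 * 2 ^ t) : oddPartBit n = true := by
  have hd := Nat.div_add_mod n (8 * 2 ^ t)
  rw [h] at hd
  have hn : n = 2 ^ (t + 1) * (4 * (n / (8 * 2 ^ t)) + 3) := by
    calc n = 8 * 2 ^ t * (n / (8 * 2 ^ t)) + 6 * 2 ^ t := hd.symm
      _ = 2 ^ (t + 1) * (4 * (n / (8 * 2 ^ t)) + 3) := by ring
  rw [hn, bitB]

lemma keylemma (t m m' : ℕ) (h1 : m % 2 ^ t = m' % 2 ^ t)
    (h2 : m % 2 ^ (t + 1) ≠ m' % 2 ^ (t + 1)) :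
    ∃ j < 2 ^ (t + 3), oddPartBit (m + j) ≠ oddPartBit (m' + j) := by
  have hexists : ∀ c < 8, ∀ c' < 8, c % 2 ≠ c' % 2 → ∃ w < 8,
      ((c + w + 1) % 8 % 4 = 1 ∧ (c' + w + 1) % 8 = 6) ∨
      ((c' + w + 1) % 8 % 4 = 1 ∧ (c + w + 1) % 8 = 6) := by decide
  set P := 2 ^ t with hP
  have hPpos : 0 < P := pow_pos (by norm_num) t
  have hM : 2 ^ (t + 3) = 8 * P := by rw [hP]; ring
  have h2P : 2 ^ (t + 1) = 2 * P := by rw [hP]; ring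
  set y := m % (8 * P) with hy
  set y' := m' % (8 * P) with hy'
  set r := y % P with hr
  set c := y / P with hc
  set c' := y' / P with hc'
  have hylt : y < 8 * P := Nat.mod_lt _ (by positivity)
  have hy'lt : y' < 8 * P := Nat.mod_lt _ (by positivity)
  have hrlt : r < P := Nat.mod_lt _ hPpos
  have hclt : c < 8 := Nat.div_lt_of_lt_mul (by omega)
  have hc'lt : c' < 8 := Nat.div_lt_of_lt_mul (by omega)
  have e1 : y % P = m % P := Nat.mod_mod_of_dvd m (dvd_mul_left P 8)
  have e2 : y' % P = m' % P := Nat.mod_mod_of_dvd m' (dvd_mul_left P 8)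
  have hrr' : y' % P = r := by rw [hr, e1, e2]; exact h1.symm
  have hyd : P * c + r = y := by rw [hc, hr]; exact Nat.div_add_mod y P
  have hy'd : P * c' + r = y' := by rw [hc', ← hrr']; exact Nat.div_add_mod y' P
  -- parity of c and c' differ
  have hcc' : c % 2 ≠ c' % 2 := by
    intro heq
    apply h2
    rw [h2P]
    have hyy' : y ≡ y' [MOD 2 * P] := by
      rw [← hyd, ← hy'd]
      have hcmod : c ≡ c' [MOD 2] := heq
      have := (hcmod.mul_left' (c := P)).add_right r
      rwa [mul_comm P 2] at this
    have d1 : m ≡ y [MOD 2 * P] :=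
      Nat.ModEq.of_dvd ⟨4, by ring⟩ (Nat.mod_modEq m (8 * P)).symm
    have d2 : y' ≡ m' [MOD 2 * P] :=
      Nat.ModEq.of_dvd ⟨4, by ring⟩ (Nat.mod_modEq m' (8 * P))
    exact (d1.trans (hyy'.trans d2))
  obtain ⟨w, hw8, hcase⟩ := hexists c hclt c' hc'lt hcc'
  set s₀ := P - r with hs₀
  have hrs : r + s₀ = P := by omega
  set j := (s₀ + P * w) % (8 * P) with hj
  have hjlt : j < 8 * P := Nat.mod_lt _ (by positivity)
  have hmj : (m + j) % (8 * P) = P * ((c + w + 1) % 8) := by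
    have e : m + j ≡ P * (c + w + 1) [MOD 8 * P] := by
      calc m + j ≡ y + (s₀ + P * w) [MOD 8 * P] :=
            Nat.ModEq.add (Nat.mod_modEq m _).symm (Nat.mod_modEq _ _)
        _ = P * (c + w + 1) := by
            rw [← hyd]
            calc P * c + r + (s₀ + P * w) = P * c + (r + s₀) + P * w := by ring
              _ = P * c + P + P * w := by rw [hrs]
              _ = P * (c + w + 1) := by ring
    calc (m + j) % (8 * P) = (P * (c + w + 1)) % (8 * P) := e
      _ = P * ((c + w + 1) % 8) := by
          rw [show 8 * P = P * 8 from by ring, Nat.mul_mod_mul_left]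
  have hm'j : (m' + j) % (8 * P) = P * ((c' + w + 1) % 8) := by
    have e : m' + j ≡ P * (c' + w + 1) [MOD 8 * P] := by
      calc m' + j ≡ y' + (s₀ + P * w) [MOD 8 * P] :=
            Nat.ModEq.add (Nat.mod_modEq m' _).symm (Nat.mod_modEq _ _)
        _ = P * (c' + w + 1) := by
            rw [← hy'd]
            calc P * c' + r + (s₀ + P * w) = P * c' + (r + s₀) + P * w := by ring
              _ = P * c' + P + P * w := by rw [hrs]
              _ = P * (c' + w + 1) := by ring
    calc (m' + j) % (8 * P) = (P * (c' + w + 1)) % (8 * P) := e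
      _ = P * ((c' + w + 1) % 8) := by
          rw [show 8 * P = P * 8 from by ring, Nat.mul_mod_mul_left]
  have mod4 : ∀ n x : ℕ, n % (8 * P) = P * x → x % 4 = 1 → n % (4 * P) = P := by
    intro n x hn hx
    have : n % (4 * P) = (n % (8 * P)) % (4 * P) :=
      (Nat.mod_mod_of_dvd n ⟨2, by ring⟩).symm
    rw [this, hn, show 4 * P = P * 4 from by ring, Nat.mul_mod_mul_left, hx, mul_one]
  refine ⟨j, by omega, ?_⟩
  rcases hcase with ⟨hA, hB⟩ | ⟨hA, hB⟩
  · have f1 : oddPartBit (m + j) = false := b_false t _ (mod4 _ _ hmj hA)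
    have f2 : oddPartBit (m' + j) = true := b_true t _ (by rw [hm'j, hB]; ring)
    rw [f1, f2]; simp
  · have f1 : oddPartBit (m' + j) = false := b_false t _ (mod4 _ _ hm'j hA)
    have f2 : oddPartBit (m + j) = true := b_true t _ (by rw [hmj, hB]; ring)
    rw [f1, f2]; simp

/-- Bit-pattern decoding: a window of `2^a` consecutive values of `b` determines the
starting point modulo `2^(a-2)`. -/
theorem window_determines_residue (a : ℕ) (ha : 2 ≤ a) (m m' : ℕ) (hm : 1 ≤ m) (hm' : 1 ≤ m')
    (h : ∀ j < 2 ^ a, oddPartBit (m + j) = oddPartBit (m' + j)) :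
    m ≡ m' [MOD 2 ^ (a - 2)] := by
  suffices H : ∀ s, s + 2 ≤ a → m % 2 ^ s = m' % 2 ^ s by
    exact H (a - 2) (by omega)
  intro s
  induction s with
  | zero => intro _; omega
  | succ s ih =>
    intro hs
    by_contra hne
    obtain ⟨j, hj, hbj⟩ := keylemma s m m' (ih (by omega)) hne
    exact hbj (h j (lt_of_lt_of_le hj (Nat.pow_le_pow_right (by norm_num) (by omega))))
end

section
/- In the diagonal construction of the partial predicate P on {0,1}^n, the number of inputs on which P is defined is less than 2^n, i.e., P diverges on some nonempty final segment [x_n, 1^n]: since each new defined value decreases the remaining universal measure of consistent total extensions by more than 2^{-n}, and the total initial mass is at most 1, at most 2^n − 1 values can be assigned. -/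
/-- In the diagonal construction of the partial predicate `P` on `{0,1}ⁿ`: if the remaining
universal measure `M x` of consistent total extensions starts at most `1` and each of the
first `D` defined values decreases it by more than `2⁻ⁿ`, then at most `2ⁿ - 1` values can
be assigned, i.e. `P` diverges on a nonempty final segment. -/
theorem diagonal_defined_count_lt (n : ℕ) (M : ℕ → NNReal) (hM0 : M 0 ≤ 1) (D : ℕ)
    (hdec : ∀ x < D, M (x + 1) + (2 : NNReal)⁻¹ ^ n < M x) :
    D ≤ 2 ^ n - 1 := by
  set ε : NNReal := (2 : NNReal)⁻¹ ^ n with hε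
  have key : ∀ k ≤ D, M k + (k : NNReal) * ε ≤ M 0 := by
    intro k hk
    induction k with
    | zero => simp
    | succ d ih =>
      have h1 : M (d + 1) + ε < M d := hdec d (lt_of_lt_of_le (Nat.lt_succ_of_le le_rfl) hk)
      have ih' := ih (Nat.le_of_succ_le hk)
      calc M (d + 1) + ((d + 1 : ℕ) : NNReal) * ε
          = M (d + 1) + ((d : NNReal) + 1) * ε := by push_cast; ring
        _          = (M (d + 1) + ε) + (d : NNReal) * ε := by ring
        _ ≤ M d + (d : NNReal) * ε := by
            exact add_le_add_left h1.le _
        _ ≤ M 0 := ih'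
  rcases Nat.eq_zero_or_pos D with h | h
  · simp [h]
  · obtain ⟨d, rfl⟩ : ∃ d, D = d + 1 := ⟨D - 1, (Nat.succ_pred_eq_of_pos h).symm⟩
    have h1 : M (d + 1) + ε < M d := hdec d (Nat.lt_succ_self d)
    have key' : M d + (d : NNReal) * ε ≤ M 0 := key d (Nat.le_succ d)
    have hlt : ((d : NNReal) + 1) * ε < 1 := by
      calc ((d : NNReal) + 1) * ε ≤ M (d + 1) + ((d : NNReal) + 1) * ε := le_add_self
        _ = (M (d + 1) + ε) + (d : NNReal) * ε := by ring
        _ < M d + (d : NNReal) * ε := by exact add_lt_add_left h1 _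
        _ ≤ M 0 := key'
        _ ≤ 1 := hM0
    have hεval : ε * (2 : NNReal) ^ n = 1 := by
      rw [hε, ← mul_pow, inv_mul_cancel₀ (by norm_num), one_pow]
    have hlt2 : ((d : NNReal) + 1) < (2 : NNReal) ^ n := by
      have h2 : ((d : NNReal) + 1) * ε * (2 : NNReal) ^ n < 1 * (2 : NNReal) ^ n :=
        mul_lt_mul_of_pos_right hlt (by positivity)
      rwa [mul_assoc, hεval, mul_one, one_mul] at h2
    have : (d + 1 : ℕ) < 2 ^ n := by
      have : ((d + 1 : ℕ) : NNReal) < ((2 ^ n : ℕ) : NNReal) := by push_cast; exact hlt2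
      exact_mod_cast this
    omega
end
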